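/- Let n = 2 and let A, J be real 2 × 3 matrices whose rows a_μ, j_μ ∈ ℝ³ satisfy the constant SU(2) Yang–Mills system ∑_{μ=1}^2 a_μ × (a_μ × a_ν) = j_ν for ν = 1, 2. Then there exist Q ∈ O(2) and P ∈ SO(3) such that QAP is diagonal (i.e. (QAP)_{νk} = 0 whenever ν ≠ k). Moreover, for all such Q and P the matrix QJP is also diagonal, and the diagonal entries a_k = (QAP)_{kk}, j_k = (QJP)_{kk}, k = 1, 2, satisfy −a₁a₂² = j₁ and −a₂a₁² = j₂. -/

import Mathlib

open Matrix

/-- Theorem 2 of the paper (case `n = 2`): if `A, J` are `2 × 3` real matrices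
satisfying the constant SU(2) Yang–Mills system, then there exist `Q ∈ O(2)`
and `P ∈ SO(3)` such that `Q*A*P` is diagonal; and for all such `Q, P`, the
matrix `Q*J*P` is also diagonal and the diagonal entries satisfy
`-a₁a₂² = j₁` and `-a₂a₁² = j₂`. -/

lemma so3_transpose {P : Matrix (Fin 3) (Fin 3) ℝ} (hP : P ∈ Matrix.specialOrthogonalGroup (Fin 3) ℝ) :
    Pᵀ ∈ Matrix.specialOrthogonalGroup (Fin 3) ℝ := by
  rw [mem_specialOrthogonalGroup_iff] at hP ⊢
  obtain ⟨hO, hd⟩ := hP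
  rw [mem_orthogonalGroup_iff] at hO ⊢
  constructor
  · rw [transpose_transpose]
    exact mul_eq_one_comm.mp hO
  · rwa [det_transpose]

lemma so3_adj {P : Matrix (Fin 3) (Fin 3) ℝ} (hP : P ∈ Matrix.specialOrthogonalGroup (Fin 3) ℝ) :
    P.adjugate = Pᵀ := by
  rw [mem_specialOrthogonalGroup_iff, mem_orthogonalGroup_iff] at hP
  obtain ⟨hO, hd⟩ := hP
  have hinv : P⁻¹ = Pᵀ := inv_eq_right_inv hO
  rw [Matrix.inv_def, hd, Ring.inverse_one, one_smul] at hinv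
  exact hinv

lemma so3_cross {P : Matrix (Fin 3) (Fin 3) ℝ} (hP : P ∈ Matrix.specialOrthogonalGroup (Fin 3) ℝ)
    (u v : Fin 3 → ℝ) :
    crossProduct (P.mulVec u) (P.mulVec v) = P.mulVec (crossProduct u v) := by
  have hadj := so3_adj hP
  rw [adjugate_fin_three] at hadj
  have h00 := congrFun (congrFun hadj 0) 0
  have h01 := congrFun (congrFun hadj 0) 1
  have h02 := congrFun (congrFun hadj 0) 2
  have h10 := congrFun (congrFun hadj 1) 0
  have h11 := congrFun (congrFun hadj 1) 1
  have h12 := congrFun (congrFun hadj 1) 2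
  have h20 := congrFun (congrFun hadj 2) 0
  have h21 := congrFun (congrFun hadj 2) 1
  have h22 := congrFun (congrFun hadj 2) 2
  simp only [Matrix.cons_val', Matrix.cons_val_zero, Matrix.cons_val_one, Matrix.head_cons,
    Matrix.head_fin_const, Matrix.empty_val', Matrix.cons_val_fin_one, Matrix.of_apply,
    Matrix.transpose_apply, Matrix.cons_val_two, Matrix.tail_cons] at h00 h01 h02 h10 h11 h12 h20 h21 h22
  funext i
  fin_cases i <;>
    simp [crossProduct, Matrix.mulVec, dotProduct, Fin.sum_univ_three]
  · linear_combination (u 1*v 2 - u 2*v 1)*h00 + (u 2*v 0 - u 0*v 2)*h10 + (u 0*v 1 - u 1*v 0)*h20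
  · linear_combination (u 1*v 2 - u 2*v 1)*h01 + (u 2*v 0 - u 0*v 2)*h11 + (u 0*v 1 - u 1*v 0)*h21
  · linear_combination (u 1*v 2 - u 2*v 1)*h02 + (u 2*v 0 - u 0*v 2)*h12 + (u 0*v 1 - u 1*v 0)*h22

lemma so3_cross_vecMul {P : Matrix (Fin 3) (Fin 3) ℝ}
    (hP : P ∈ Matrix.specialOrthogonalGroup (Fin 3) ℝ) (u v : Fin 3 → ℝ) :
    crossProduct (u ᵥ* P) (v ᵥ* P) = (crossProduct u v) ᵥ* P := by
  have h := so3_cross (so3_transpose hP) u v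
  simpa [Matrix.mulVec_transpose] using h

lemma row_mul (M : Matrix (Fin 2) (Fin 3) ℝ) (P : Matrix (Fin 3) (Fin 3) ℝ) (μ : Fin 2) :
    (M * P) μ = (M μ) ᵥ* P := by
  funext k; simp [Matrix.mul_apply, Matrix.vecMul, dotProduct]

lemma ym_mulP (A J : Matrix (Fin 2) (Fin 3) ℝ)
    (hYM : ∀ ν : Fin 2,
      ∑ μ : Fin 2, crossProduct (A μ) (crossProduct (A μ) (A ν)) = J ν)
    {P : Matrix (Fin 3) (Fin 3) ℝ} (hP : P ∈ Matrix.specialOrthogonalGroup (Fin 3) ℝ) :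
    ∀ ν : Fin 2, ∑ μ : Fin 2,
      crossProduct ((A * P) μ) (crossProduct ((A * P) μ) ((A * P) ν)) = (J * P) ν := by
  intro ν
  have : ∀ μ : Fin 2, crossProduct ((A * P) μ) (crossProduct ((A * P) μ) ((A * P) ν))
      = (crossProduct (A μ) (crossProduct (A μ) (A ν))) ᵥ* P := by
    intro μ
    rw [row_mul, row_mul, so3_cross_vecMul hP, so3_cross_vecMul hP]
  rw [Fin.sum_univ_two, this 0, this 1, row_mul, ← hYM ν, Fin.sum_univ_two, Matrix.add_vecMul]

lemma row_mul2 (Q : Matrix (Fin 2) (Fin 2) ℝ) (M : Matrix (Fin 2) (Fin 3) ℝ) (ν : Fin 2) :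
    (Q * M) ν = Q ν 0 • M 0 + Q ν 1 • M 1 := by
  funext k; simp [Matrix.mul_apply, Fin.sum_univ_two]

lemma ym_mulQ (M N : Matrix (Fin 2) (Fin 3) ℝ)
    (hYM : ∀ ν : Fin 2,
      ∑ μ : Fin 2, crossProduct (M μ) (crossProduct (M μ) (M ν)) = N ν)
    {Q : Matrix (Fin 2) (Fin 2) ℝ} (hQ : Q ∈ Matrix.orthogonalGroup (Fin 2) ℝ) :
    ∀ ν : Fin 2, ∑ μ : Fin 2,
      crossProduct ((Q * M) μ) (crossProduct ((Q * M) μ) ((Q * M) ν)) = (Q * N) ν := by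
  have hQ' : star Q * Q = 1 := (Matrix.mem_orthogonalGroup_iff' (Fin 2) ℝ).mp hQ
  rw [Matrix.star_eq_conjTranspose, Matrix.conjTranspose_eq_transpose_of_trivial] at hQ'
  have e00 := congrFun (congrFun hQ' 0) 0
  have e01 := congrFun (congrFun hQ' 0) 1
  have e10 := congrFun (congrFun hQ' 1) 0
  have e11 := congrFun (congrFun hQ' 1) 1
  simp [Matrix.mul_apply, Fin.sum_univ_two, Matrix.one_apply] at e00 e01 e10 e11
  have key : ∀ w : Fin 3 → ℝ,
      ∑ μ : Fin 2, crossProduct ((Q * M) μ) (crossProduct ((Q * M) μ) w)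
      = ∑ μ : Fin 2, crossProduct (M μ) (crossProduct (M μ) w) := by
    intro w
    rw [Fin.sum_univ_two, Fin.sum_univ_two, row_mul2, row_mul2]
    simp only [map_add, _root_.map_smul, LinearMap.add_apply, LinearMap.smul_apply]
    match_scalars
    · linear_combination e00
    · linear_combination e01
    · linear_combination e01
    · linear_combination e11
  intro ν
  rw [key ((Q * M) ν), row_mul2]
  simp only [map_add, _root_.map_smul, Fin.sum_univ_two, LinearMap.add_apply, LinearMap.smul_apply,
    smul_add]
  rw [row_mul2, ← hYM 0, ← hYM 1, Fin.sum_univ_two, Fin.sum_univ_two]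
  module

lemma perp_helper (w : Fin 3 → ℝ) (hw : w ⬝ᵥ w = 1) :
    ∃ w' : Fin 3 → ℝ, w' ⬝ᵥ w' = 1 ∧ w ⬝ᵥ w' = 0 := by
  by_cases h : w 1 ^ 2 + w 2 ^ 2 = 0
  · refine ⟨![0, 1, 0], by simp [dotProduct, Fin.sum_univ_three], ?_⟩
    have h1 : w 1 = 0 := by nlinarith [sq_nonneg (w 1), sq_nonneg (w 2)]
    simp [dotProduct, Fin.sum_univ_three, h1]
  · have hpos : 0 < w 1 ^ 2 + w 2 ^ 2 := by
      rcases lt_or_eq_of_le (by positivity : (0:ℝ) ≤ w 1 ^ 2 + w 2 ^ 2) with h' | h'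
      · exact h'
      · exact absurd h'.symm h
    set t := Real.sqrt (w 1 ^ 2 + w 2 ^ 2) with ht
    have htpos : 0 < t := Real.sqrt_pos.mpr hpos
    have ht2 : t ^ 2 = w 1 ^ 2 + w 2 ^ 2 := Real.sq_sqrt hpos.le
    refine ⟨t⁻¹ • ![0, w 2, -(w 1)], ?_, ?_⟩
    · simp only [dotProduct, Fin.sum_univ_three, Pi.smul_apply, smul_eq_mul]
      simp only [Matrix.cons_val_zero, Matrix.cons_val_one, Matrix.head_cons,
        Matrix.cons_val_two, Matrix.tail_cons]
      field_simp
      linarith [ht2]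
    · simp only [dotProduct, Fin.sum_univ_three, Pi.smul_apply, smul_eq_mul]
      simp only [Matrix.cons_val_zero, Matrix.cons_val_one, Matrix.head_cons,
        Matrix.cons_val_two, Matrix.tail_cons]
      ring

lemma frame_so3 (r₀ r₁ : Fin 3 → ℝ) (h00 : r₀ ⬝ᵥ r₀ = 1) (h11 : r₁ ⬝ᵥ r₁ = 1)
    (h01 : r₀ ⬝ᵥ r₁ = 0) :
    (Matrix.of ![r₀, r₁, crossProduct r₀ r₁]) ∈ Matrix.specialOrthogonalGroup (Fin 3) ℝ := by
  simp only [dotProduct, Fin.sum_univ_three] at h00 h11 h01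
  rw [mem_specialOrthogonalGroup_iff]
  constructor
  · rw [mem_orthogonalGroup_iff]
    ext i j
    fin_cases i <;> fin_cases j <;>
      simp [Matrix.mul_apply, Fin.sum_univ_three, crossProduct, Matrix.one_apply,
        Matrix.vecHead, Matrix.vecTail, Matrix.transpose_apply, Function.comp] <;>
      (first
        | ring1
        | linear_combination h00
        | linear_combination h11
        | linear_combination h01
        | linear_combination (r₁ 0^2 + r₁ 1^2 + r₁ 2^2) * h00 + h11
            - (r₀ 0 * r₁ 0 + r₀ 1 * r₁ 1 + r₀ 2 * r₁ 2) * h01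
        | linear_combination (r₀ 0 * r₁ 0 + r₀ 1 * r₁ 1 + r₀ 2 * r₁ 2) * h00 - h01
        | linear_combination (r₀ 0 * r₁ 0 + r₀ 1 * r₁ 1 + r₀ 2 * r₁ 2) * h11 - h01)
  · rw [Matrix.det_fin_three]
    simp [crossProduct, Matrix.vecHead, Matrix.vecTail, Function.comp]
    first
      | linear_combination (r₁ 0^2 + r₁ 1^2 + r₁ 2^2) * h00 + h11
          - (r₀ 0 * r₁ 0 + r₀ 1 * r₁ 1 + r₀ 2 * r₁ 2) * h01
      | linear_combination (r₀ 0^2 + r₀ 1^2 + r₀ 2^2) * h11 + h00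
          - (r₀ 0 * r₁ 0 + r₀ 1 * r₁ 1 + r₀ 2 * r₁ 2) * h01

lemma ortho_pair (u v : Fin 3 → ℝ) (huv : u ⬝ᵥ v = 0) :
    ∃ (r₀ r₁ : Fin 3 → ℝ) (α β : ℝ), r₀ ⬝ᵥ r₀ = 1 ∧ r₁ ⬝ᵥ r₁ = 1 ∧ r₀ ⬝ᵥ r₁ = 0 ∧
      u = α • r₀ ∧ v = β • r₁ := by
  have dpos : ∀ w : Fin 3 → ℝ, w ≠ 0 → 0 < w ⬝ᵥ w := by
    intro w hw
    have hnn : 0 ≤ w ⬝ᵥ w := Finset.sum_nonneg fun i _ => mul_self_nonneg _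
    rcases lt_or_eq_of_le hnn with h | h
    · exact h
    · exact absurd (dotProduct_self_eq_zero.mp h.symm) hw
  have unit : ∀ w : Fin 3 → ℝ, w ≠ 0 →
      ∃ (r : Fin 3 → ℝ) (t : ℝ), r ⬝ᵥ r = 1 ∧ w = t • r := by
    intro w hw
    have hp := dpos w hw
    have ht2 : Real.sqrt (w ⬝ᵥ w) ^ 2 = w ⬝ᵥ w := Real.sq_sqrt hp.le
    have htpos : 0 < Real.sqrt (w ⬝ᵥ w) := Real.sqrt_pos.mpr hp
    refine ⟨(Real.sqrt (w ⬝ᵥ w))⁻¹ • w, Real.sqrt (w ⬝ᵥ w), ?_, ?_⟩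
    · have key : ∀ x : ℝ, x ≠ 0 → x⁻¹ * x⁻¹ * x ^ 2 = 1 := by intro x hx; field_simp
      rw [smul_dotProduct, dotProduct_smul, smul_eq_mul, smul_eq_mul,
        ← mul_assoc]
      nth_rewrite 3 [← ht2]
      exact key _ htpos.ne'
    · rw [smul_smul]
      rw [mul_inv_cancel₀ htpos.ne', one_smul]
  by_cases hu : u = 0
  · by_cases hv : v = 0
    · refine ⟨![1,0,0], ![0,1,0], 0, 0, ?_, ?_, ?_, by simp [hu], by simp [hv]⟩ <;>
        simp [dotProduct, Fin.sum_univ_three]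
    · obtain ⟨r₁, t, hr₁, hv'⟩ := unit v hv
      obtain ⟨r₀, hr₀, hperp⟩ := perp_helper r₁ hr₁
      exact ⟨r₀, r₁, 0, t, hr₀, hr₁, by rwa [dotProduct_comm], by simp [hu], hv'⟩
  · by_cases hv : v = 0
    · obtain ⟨r₀, t, hr₀, hu'⟩ := unit u hu
      obtain ⟨r₁, hr₁, hperp⟩ := perp_helper r₀ hr₀
      exact ⟨r₀, r₁, t, 0, hr₀, hr₁, hperp, hu', by simp [hv]⟩
    · obtain ⟨r₀, t, hr₀, hu'⟩ := unit u hu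
      obtain ⟨r₁, t', hr₁, hv'⟩ := unit v hv
      have htpos : t ≠ 0 := by
        rintro rfl; simp at hu'; exact hu hu'
      have ht'pos : t' ≠ 0 := by
        rintro rfl; simp at hv'; exact hv hv'
      refine ⟨r₀, r₁, t, t', hr₀, hr₁, ?_, hu', hv'⟩
      have : u ⬝ᵥ v = (t * t') * (r₀ ⬝ᵥ r₁) := by
        rw [hu', hv', smul_dotProduct, dotProduct_smul, smul_eq_mul, smul_eq_mul]
        ring
      rw [this] at huv
      exact (mul_eq_zero.mp huv).resolve_left (mul_ne_zero htpos ht'pos)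

lemma p_exists (u v : Fin 3 → ℝ) (huv : u ⬝ᵥ v = 0) :
    ∃ P ∈ Matrix.specialOrthogonalGroup (Fin 3) ℝ,
      (u ᵥ* P) 1 = 0 ∧ (u ᵥ* P) 2 = 0 ∧ (v ᵥ* P) 0 = 0 ∧ (v ᵥ* P) 2 = 0 := by
  obtain ⟨r₀, r₁, α, β, h00, h11, h01, hu, hv⟩ := ortho_pair u v huv
  set M : Matrix (Fin 3) (Fin 3) ℝ := Matrix.of ![r₀, r₁, crossProduct r₀ r₁] with hM
  have hMmem := frame_so3 r₀ r₁ h00 h11 h01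
  have k1 : r₁ ⬝ᵥ u = 0 := by
    rw [hu, dotProduct_smul, dotProduct_comm, h01, smul_zero]
  have k2 : (crossProduct r₀ r₁) ⬝ᵥ u = 0 := by
    rw [hu, dotProduct_smul, dotProduct_comm, dot_self_cross, smul_zero]
  have k3 : r₀ ⬝ᵥ v = 0 := by
    rw [hv, dotProduct_smul, h01, smul_zero]
  have k4 : (crossProduct r₀ r₁) ⬝ᵥ v = 0 := by
    rw [hv, dotProduct_smul, dotProduct_comm, dot_cross_self, smul_zero]
  refine ⟨Mᵀ, so3_transpose hMmem, ?_, ?_, ?_, ?_⟩ <;> rw [Matrix.vecMul_transpose]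
  · exact k1
  · exact k2
  · exact k3
  · exact k4

lemma exists_cs (q m : ℝ) : ∃ c s : ℝ, c^2 + s^2 = 1 ∧ q*(c^2 - s^2) + 2*m*(c*s) = 0 := by
  by_cases hq : q = 0
  · exact ⟨1, 0, by norm_num, by simp [hq]⟩
  · have hN2pos : 0 < q^2 + m^2 := by positivity
    set N := Real.sqrt (q^2 + m^2) with hN
    have hNpos : 0 < N := Real.sqrt_pos.mpr hN2pos
    have hN2 : N^2 = q^2 + m^2 := Real.sq_sqrt hN2pos.le
    set x := -m/N with hx
    set y := q/N with hy
    have hxy : x^2 + y^2 = 1 := by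
      rw [hx, hy, div_pow, div_pow, ← add_div, hN2]
      field_simp
      ring
    have hynz : y ≠ 0 := by
      rw [hy]
      exact div_ne_zero hq hNpos.ne'
    have h1x : 0 < 1 + x := by
      rcases lt_trichotomy x (-1) with h | h | h
      · nlinarith [sq_nonneg y]
      · exfalso; apply hynz; nlinarith
      · linarith
    set c := Real.sqrt ((1+x)/2) with hc
    have hcpos : 0 < c := Real.sqrt_pos.mpr (by linarith)
    have hc2 : c^2 = (1+x)/2 := Real.sq_sqrt (by linarith)
    set s := y/(2*c) with hs
    have hs2 : s^2 = (1-x)/2 := by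
      rw [hs, div_pow]
      have h2c : (2*c)^2 = 2*(1+x) := by rw [mul_pow, hc2]; ring
      rw [h2c]
      have hy2 : y^2 = (1-x)*(1+x) := by nlinarith
      rw [hy2, div_eq_div_iff (by positivity) two_ne_zero]
      ring
    have h2cs : 2*(c*s) = y := by
      rw [hs]
      field_simp
    refine ⟨c, s, by rw [hc2, hs2]; ring, ?_⟩
    have hdiff : c^2 - s^2 = x := by rw [hc2, hs2]; ring
    rw [hdiff]
    have : q * x + m * y = 0 := by
      rw [hx, hy]
      field_simp
      ring
    linear_combination this + m * h2cs

lemma o2_exists (S : Matrix (Fin 2) (Fin 2) ℝ) (hsym : S 0 1 = S 1 0) :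
    ∃ Q ∈ Matrix.orthogonalGroup (Fin 2) ℝ,
      (Q * S * Qᵀ) 0 1 = 0 ∧ (Q * S * Qᵀ) 1 0 = 0 := by
  obtain ⟨c, s, hcs, hcond⟩ := exists_cs (S 0 1) ((S 1 1 - S 0 0)/2)
  refine ⟨!![c, s; -s, c], ?_, ?_, ?_⟩
  · rw [mem_orthogonalGroup_iff]
    ext i j
    fin_cases i <;> fin_cases j <;>
      simp [Matrix.mul_apply, Fin.sum_univ_two, Matrix.one_apply, Matrix.vecHead,
        Matrix.vecTail, Matrix.transpose_apply, Function.comp] <;>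
      (first | ring1 | linear_combination hcs | linear_combination -hcs)
  · simp [Matrix.mul_apply, Matrix.vecMul, dotProduct, Fin.sum_univ_two,
      Matrix.vecHead, Matrix.vecTail, Matrix.transpose_apply, Function.comp]
    linear_combination hcond + s^2 * hsym
  · simp [Matrix.mul_apply, Matrix.vecMul, dotProduct, Fin.sum_univ_two,
      Matrix.vecHead, Matrix.vecTail, Matrix.transpose_apply, Function.comp]
    linear_combination hcond - c^2 * hsym

lemma diag_ym (D E : Matrix (Fin 2) (Fin 3) ℝ)
    (hYM : ∀ ν : Fin 2,
      ∑ μ : Fin 2, crossProduct (D μ) (crossProduct (D μ) (D ν)) = E ν)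
    (hd : ∀ (ν : Fin 2) (k : Fin 3), (ν : ℕ) ≠ (k : ℕ) → D ν k = 0) :
    (∀ (ν : Fin 2) (k : Fin 3), (ν : ℕ) ≠ (k : ℕ) → E ν k = 0) ∧
    E 0 0 = -(D 0 0) * (D 1 1)^2 ∧ E 1 1 = -(D 1 1) * (D 0 0)^2 := by
  have z01 : D 0 1 = 0 := hd 0 1 (by norm_num)
  have z02 : D 0 2 = 0 := hd 0 2 (by norm_num)
  have z10 : D 1 0 = 0 := hd 1 0 (by norm_num)
  have z12 : D 1 2 = 0 := hd 1 2 (by norm_num)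
  have key : ∀ (ν : Fin 2) (k : Fin 3), E ν k =
      (crossProduct (D 0) (crossProduct (D 0) (D ν))
        + crossProduct (D 1) (crossProduct (D 1) (D ν))) k := by
    intro ν k
    rw [← hYM ν, Fin.sum_univ_two]
  refine ⟨?_, ?_, ?_⟩
  · intro ν k hne
    fin_cases ν <;> fin_cases k <;> (try exact absurd rfl hne) <;>
      rw [key] <;>
      simp [crossProduct, z01, z02, z10, z12]
  · rw [key]
    simp [crossProduct, z01, z02, z10, z12]
    ring
  · rw [key]
    simp [crossProduct, z01, z02, z10, z12]
    ring

theorem su2_ym_diagonalization_dim_two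
    (A J : Matrix (Fin 2) (Fin 3) ℝ)
    (hYM : ∀ ν : Fin 2,
      ∑ μ : Fin 2, crossProduct (A μ) (crossProduct (A μ) (A ν)) = J ν) :
    (∃ Q ∈ Matrix.orthogonalGroup (Fin 2) ℝ,
      ∃ P ∈ Matrix.specialOrthogonalGroup (Fin 3) ℝ,
        ∀ (ν : Fin 2) (k : Fin 3), (ν : ℕ) ≠ (k : ℕ) → (Q * A * P) ν k = 0) ∧
    (∀ Q ∈ Matrix.orthogonalGroup (Fin 2) ℝ,
      ∀ P ∈ Matrix.specialOrthogonalGroup (Fin 3) ℝ,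
        (∀ (ν : Fin 2) (k : Fin 3), (ν : ℕ) ≠ (k : ℕ) → (Q * A * P) ν k = 0) →
        (∀ (ν : Fin 2) (k : Fin 3), (ν : ℕ) ≠ (k : ℕ) → (Q * J * P) ν k = 0) ∧
        (∀ a j : Fin 2 → ℝ,
          (∀ k : Fin 2, a k = (Q * A * P) k (Fin.castLE (by norm_num) k)) →
          (∀ k : Fin 2, j k = (Q * J * P) k (Fin.castLE (by norm_num) k)) →
          -a 0 * (a 1) ^ 2 = j 0 ∧ -a 1 * (a 0) ^ 2 = j 1)) := by
  constructor
  · -- existence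
    set S := A * Aᵀ with hS
    have hsym : S 0 1 = S 1 0 := by
      simp [hS, Matrix.mul_apply, Fin.sum_univ_three, Matrix.transpose_apply]
      ring
    obtain ⟨Q, hQ, h01, h10⟩ := o2_exists S hsym
    set B := Q * A with hB
    have hBBt : B * Bᵀ = Q * S * Qᵀ := by
      rw [hB, hS, Matrix.transpose_mul, ← Matrix.mul_assoc, Matrix.mul_assoc Q A Aᵀ]
    have hudot : (B 0) ⬝ᵥ (B 1) = 0 := by
      have : (B * Bᵀ) 0 1 = (B 0) ⬝ᵥ (B 1) := by
        simp [Matrix.mul_apply, dotProduct, Matrix.transpose_apply]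
      rw [← this, hBBt]
      exact h01
    obtain ⟨P, hP, k1, k2, k3, k4⟩ := p_exists (B 0) (B 1) hudot
    refine ⟨Q, hQ, P, hP, ?_⟩
    intro ν k hne
    have hrow : ∀ (ν : Fin 2) (k : Fin 3), (Q * A * P) ν k = ((B ν) ᵥ* P) k := by
      intro ν k
      rw [← hB, row_mul]
    fin_cases ν <;> fin_cases k <;> (try exact absurd rfl hne) <;> rw [hrow]
    · exact k1
    · exact k2
    · exact k3
    · exact k4
  · -- uniqueness / formulas
    intro Q hQ P hP hdiag
    have hYM1 := ym_mulP A J hYM hP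
    have hYM2 := ym_mulQ (A * P) (J * P) hYM1 hQ
    rw [← Matrix.mul_assoc, ← Matrix.mul_assoc] at hYM2
    obtain ⟨hEdiag, hv0, hv1⟩ := diag_ym (Q * A * P) (Q * J * P) hYM2 hdiag
    refine ⟨hEdiag, ?_⟩
    intro a j ha hj
    have ha0 : a 0 = (Q * A * P) 0 0 := ha 0
    have ha1 : a 1 = (Q * A * P) 1 1 := ha 1
    have hj0 : j 0 = (Q * J * P) 0 0 := hj 0
    have hj1 : j 1 = (Q * J * P) 1 1 := hj 1
    constructor
    · rw [ha0, ha1, hj0]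
      linear_combination -hv0
    · rw [ha0, ha1, hj1]
      linear_combination -hv1
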